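/- Let 𝓕 be a family of functions from [0,1] to ℝ and suppose there exists F ∈ 𝓕 such that f ∘ F ∈ 𝓕 \ {0} for every exponential like function f : ℝ → ℝ. Let H ⊆ ℝ be a set that is linearly independent over the rationals ℚ. Then for every n ≥ 1, all distinct r_1, …, r_n ∈ H, and every nonzero real polynomial P in n variables with zero constant term, the function x ↦ P(e^{r_1 F(x)}, e^{r_2 F(x)}, …, e^{r_n F(x)}) belongs to 𝓕 \ {0}. In particular, the functions x ↦ e^{r F(x)}, r ∈ H, are free generators of a subalgebra of ℝ^{[0,1]} contained in 𝓕 ∪ {0}. -/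

import Mathlib

open Set

/-- `f : ℝ → ℝ` is exponential like (of some range `m ≥ 1`) if
`f x = ∑ i, a i * exp (β i * x)` with the `β i` distinct and nonzero and the `a i` nonzero. -/
def ExpLike (f : ℝ → ℝ) : Prop :=
  ∃ m : ℕ, 1 ≤ m ∧ ∃ a β : Fin m → ℝ,
    (∀ i, a i ≠ 0) ∧ (∀ i, β i ≠ 0) ∧ Function.Injective β ∧
    f = fun x => ∑ i, a i * Real.exp (β i * x)

/-- Proposition 1 of the paper, general criterion of strong
`𝔠`-algebrability. If `𝓕` is a family of functions `[0,1] → ℝ` and `F ∈ 𝓕` satisfies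
`f ∘ F ∈ 𝓕 \ {0}` for every exponential like `f`, then for any set `H ⊆ ℝ` linearly
independent over `ℚ`, every evaluation of a nonzero polynomial without constant term at
the functions `x ↦ exp (r i * F x)` (for distinct `r i ∈ H`) lies in `𝓕 \ {0}`; hence
these functions are free generators of a subalgebra of `ℝ^[0,1]` contained in `𝓕 ∪ {0}`. -/
theorem strong_algebrability_criterion
    (𝓕 : Set (↥(Icc (0:ℝ) 1) → ℝ)) (F : ↥(Icc (0:ℝ) 1) → ℝ) (hF : F ∈ 𝓕)
    (hcomp : ∀ f : ℝ → ℝ, ExpLike f → f ∘ F ∈ 𝓕 ∧ f ∘ F ≠ 0)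
    (H : Set ℝ) (hH : LinearIndependent ℚ ((↑) : H → ℝ)) :
    ∀ n : ℕ, 1 ≤ n → ∀ r : Fin n → ℝ, (∀ i, r i ∈ H) → Function.Injective r →
      ∀ P : MvPolynomial (Fin n) ℝ, P ≠ 0 → MvPolynomial.coeff 0 P = 0 →
        (fun x => MvPolynomial.eval (fun i => Real.exp (r i * F x)) P) ∈ 𝓕 ∧
        (fun x : ↥(Icc (0:ℝ) 1) =>
          MvPolynomial.eval (fun i => Real.exp (r i * F x)) P) ≠ 0 := by
  intro n hn r hr hrinj P hP hP0
  have hli : LinearIndependent ℚ r := by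
    have h1 : Function.Injective (fun i => (⟨r i, hr i⟩ : H)) := by
      intro i j h
      exact hrinj (congrArg Subtype.val h)
    have := hH.comp (fun i => (⟨r i, hr i⟩ : H)) h1
    simpa [Function.comp_def] using this
  have key : ∀ d d' : Fin n →₀ ℕ,
      (∑ i, (d i : ℝ) * r i) = (∑ i, (d' i : ℝ) * r i) → d = d' := by
    intro d d' h
    rw [Fintype.linearIndependent_iff] at hli
    have h2 : ∑ i, ((d i : ℚ) - (d' i : ℚ)) • r i = 0 := by
      have he : ∀ i, ((d i : ℚ) - (d' i : ℚ)) • r i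
          = (d i : ℝ) * r i - (d' i : ℝ) * r i := by
        intro i
        push_cast [Rat.smul_def]
        ring
      rw [Finset.sum_congr rfl (fun i _ => he i), Finset.sum_sub_distrib, h, sub_self]
    have h3 := hli _ h2
    ext i
    have h4 : (d i : ℚ) = (d' i : ℚ) := sub_eq_zero.mp (h3 i)
    exact_mod_cast h4
  set f : ℝ → ℝ := fun t => MvPolynomial.eval (fun i => Real.exp (r i * t)) P with hf
  have hne : P.support.Nonempty := by
    rwa [Finset.nonempty_iff_ne_empty, Ne, MvPolynomial.support_eq_empty]
  have h0 : (0 : Fin n →₀ ℕ) ∉ P.support := by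
    rw [MvPolynomial.mem_support_iff]
    simpa using hP0
  have hexp : ExpLike f := by
    refine ⟨P.support.card, Finset.card_pos.mpr hne, ?_⟩
    set e := P.support.equivFin with he
    refine ⟨fun i => MvPolynomial.coeff (e.symm i : Fin n →₀ ℕ) P,
      fun i => ∑ j, (((e.symm i : Fin n →₀ ℕ) j : ℝ) * r j), ?_, ?_, ?_, ?_⟩
    · intro i
      exact MvPolynomial.mem_support_iff.mp (e.symm i).2
    · intro i hzero
      apply h0
      have : ((e.symm i : Fin n →₀ ℕ)) = 0 := by
        apply key
        simpa using hzero
      rw [← this]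
      exact (e.symm i).2
    · intro i j hij
      have : (e.symm i : Fin n →₀ ℕ) = (e.symm j : Fin n →₀ ℕ) := key _ _ hij
      have := Subtype.ext this
      simpa using congrArg e this
    · funext x
      show (MvPolynomial.eval fun i => Real.exp (r i * x)) P = _
      rw [MvPolynomial.eval_eq']
      have hterm : ∀ d : Fin n →₀ ℕ, (∏ j, Real.exp (r j * x) ^ d j)
          = Real.exp ((∑ j, (d j : ℝ) * r j) * x) := by
        intro d
        rw [Finset.sum_mul, Real.exp_sum]
        refine Finset.prod_congr rfl fun j _ => ?_
        rw [← Real.exp_nat_mul]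
        ring_nf
      rw [← Finset.sum_coe_sort P.support
        (fun d => MvPolynomial.coeff d P * ∏ j, Real.exp (r j * x) ^ d j),
        ← Equiv.sum_comp e.symm
          (fun d : {y // y ∈ P.support} =>
            MvPolynomial.coeff (d : Fin n →₀ ℕ) P * ∏ j, Real.exp (r j * x) ^ (d : Fin n →₀ ℕ) j)]
      refine Finset.sum_congr rfl fun i _ => ?_
      rw [hterm]
  have := hcomp f hexp
  simpa [hf, Function.comp_def] using this
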